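/- Let n ≥ 1, p ≥ 1, and let ω be a smooth p-form on |Δ^n|. Then for every increasing tuple 0 ≤ i_0 < i_1 < … < i_p ≤ n, ∫_{[i_0,…,i_p]} ω = (−1)^p · (h^{i_{p−1}}∘⋯∘h^{i_0}(ω))(e_{i_p}), where the right-hand side is the 0-form h^{i_{p−1}}∘⋯∘h^{i_0}(ω) evaluated at the vertex e_{i_p}. -/

import Mathlib

open MeasureTheory
open scoped BigOperators

noncomputable section

/-- ℝ^{n+1} -/
abbrev Vec (n : ℕ) := Fin (n + 1) → ℝ

/-- standard basis vector e_i -/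
def eVec (n : ℕ) (i : Fin (n + 1)) : Vec n := Pi.single i 1

/-- Raw (not necessarily alternating) inhomogeneous forms: a family of
degree-`p` "forms" given as functions of a point and a `p`-tuple of vectors. -/
def MForm (n : ℕ) := (p : ℕ) → Vec n → (Fin p → Vec n) → ℝ

/-- Embed a raw `p`-form as an inhomogeneous form concentrated in degree `p`. -/
def ofDeg (n p : ℕ) (ω : Vec n → (Fin p → Vec n) → ℝ) : MForm n :=
  fun q t v => if h : q = p then ω t (fun i => v (Fin.cast h.symm i)) else 0

/-- Exterior derivative. -/
def exd (n : ℕ) (F : MForm n) : MForm n :=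
  fun q => match q with
  | 0 => fun _ _ => 0
  | (p + 1) => fun t v =>
      ∑ j : Fin (p + 1), (-1 : ℝ) ^ (j : ℕ) *
        fderiv ℝ (fun x => F p x (fun i => v (Fin.succAbove j i))) t (v j)

/-- The Dupont operator `h^i`. -/
def hOp (n : ℕ) (i : Fin (n + 1)) (F : MForm n) : MForm n :=
  fun p t v =>
    ∫ s in (0:ℝ)..1, (1 - s) ^ p *
      F (p + 1) ((1 - s) • t + s • eVec n i) (Fin.cons (eVec n i - t) v)

/-- Iterated Dupont operators `h^{i_k} ∘ ⋯ ∘ h^{i_0}`. -/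
def hTuple (n : ℕ) {m : ℕ} (c : Fin m → Fin (n + 1)) (F : MForm n) : MForm n :=
  (List.ofFn c).foldl (fun G i => hOp n i G) F

/-- The Whitney form ω_{c 0, …, c p}. -/
def whitney (n p : ℕ) (c : Fin (p + 1) → Fin (n + 1)) :
    Vec n → (Fin p → Vec n) → ℝ :=
  fun t v => ∑ l : Fin (p + 1), (-1 : ℝ) ^ (l : ℕ) * t (c l) *
    Matrix.det (Matrix.of fun a b : Fin p => v a (c (Fin.succAbove l b)))

/-- ω̄ = p! ω. -/
def whitneyBar (n p : ℕ) (c : Fin (p + 1) → Fin (n + 1)) :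
    Vec n → (Fin p → Vec n) → ℝ :=
  fun t v => (Nat.factorial p : ℝ) * whitney n p c t v

/-- Wedge of a homogeneous `k`-form with an inhomogeneous form. -/
def wedgeHom (n k : ℕ) (α : Vec n → (Fin k → Vec n) → ℝ) (G : MForm n) : MForm n :=
  fun q t v =>
    if h : k ≤ q then
      ((Nat.factorial k : ℝ) * (Nat.factorial (q - k) : ℝ))⁻¹ *
        ∑ σ : Equiv.Perm (Fin q), ((Equiv.Perm.sign σ : ℤ) : ℝ) *
          α t (fun i => v (σ (Fin.castLE h i))) *
          G (q - k) t (fun j => v (σ (Fin.cast (Nat.add_sub_cancel' h) (Fin.natAdd k j))))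
    else 0

open scoped Classical in
/-- The Dupont homotopy. -/
def sDup (n : ℕ) (F : MForm n) : MForm n :=
  fun q t v => - ∑ k ∈ Finset.range n,
    ∑ c ∈ Finset.univ.filter (fun c : Fin (k + 1) → Fin (n + 1) => StrictMono c),
      wedgeHom n k (whitneyBar n k c) (hTuple n c F) q t v

/-- The unit cube [0,1]^p. -/
def cubeSet (p : ℕ) : Set (Fin p → ℝ) := Set.univ.pi fun _ => Set.Icc (0:ℝ) 1

/-- Canonical parametrization of the simplex with vertices `verts`. -/
def GmapV (n p : ℕ) (verts : Fin (p + 1) → Vec n) : (Fin p → ℝ) → Vec n :=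
  fun s => ∑ l : Fin (p + 1),
    ((∏ b ∈ Finset.univ.filter (fun b : Fin p => (b : ℕ) < (l : ℕ)), s b) *
      (if h : (l : ℕ) < p then 1 - s ⟨l, h⟩ else 1)) • verts l

/-- Integral of a raw `p`-form over the simplex with vertices `verts`. -/
def simplexIntV (n p : ℕ) (verts : Fin (p + 1) → Vec n)
    (ω : Vec n → (Fin p → Vec n) → ℝ) : ℝ :=
  ∫ s in cubeSet p, ω (GmapV n p verts s)
      (fun a => fderiv ℝ (GmapV n p verts) s (Pi.single a 1))

/-- ∫_{[c 0, …, c p]} ω. -/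
def simplexInt (n p : ℕ) (c : Fin (p + 1) → Fin (n + 1))
    (ω : Vec n → (Fin p → Vec n) → ℝ) : ℝ :=
  simplexIntV n p (fun l => eVec n (c l)) ω

open scoped Classical in
/-- (WR)(ω) for a homogeneous raw p-form ω. -/
def WRhom (n p : ℕ) (ω : Vec n → (Fin p → Vec n) → ℝ) :
    Vec n → (Fin p → Vec n) → ℝ :=
  fun t v =>
    ∑ c ∈ Finset.univ.filter (fun c : Fin (p + 1) → Fin (n + 1) => StrictMono c),
      simplexInt n p c ω * whitneyBar n p c t v

lemma Gmap_zero (n : ℕ) (verts : Fin 1 → Vec n) (s : Fin 0 → ℝ) :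
    GmapV n 0 verts s = verts 0 := by
  simp [GmapV]

lemma Gmap_succ (n p : ℕ) (verts : Fin (p + 2) → Vec n) (s : Fin (p + 1) → ℝ) :
    GmapV n (p + 1) verts s
      = (1 - s 0) • verts 0 + s 0 • GmapV n p (fun l => verts l.succ) (Fin.tail s) := by
  rw [GmapV, Fin.sum_univ_succ]
  congr 1
  · simp
  · rw [GmapV, Finset.smul_sum]
    refine Finset.sum_congr rfl fun l _ => ?_
    rw [smul_smul]
    congr 1
    have h1 : ∀ l' : Fin (p + 1), (∏ b ∈ Finset.univ.filter (fun b : Fin (p+1) => (b : ℕ) < ((l'.succ : Fin (p+2)) : ℕ)), s b)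
        = s 0 * ∏ b ∈ Finset.univ.filter (fun b : Fin p => (b : ℕ) < (l' : ℕ)), Fin.tail s b := by
      intro l'
      rw [Finset.prod_filter, Finset.prod_filter, Fin.prod_univ_succ]
      simp [Fin.tail]
    rw [h1]
    have h2 : ((l.succ : Fin (p+2)) : ℕ) < p + 1 ↔ (l : ℕ) < p := by simp
    by_cases h : (l : ℕ) < p
    · rw [dif_pos ((h2).mpr h), dif_pos h]
      have : s ⟨(l.succ : Fin (p+2)) , (h2).mpr h⟩ = Fin.tail s ⟨l, h⟩ := by
        simp [Fin.tail]
      rw [this]; ring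
    · rw [dif_neg (fun hh => h (h2.mp hh)), dif_neg h]; ring


noncomputable def Gder (n : ℕ) : (p : ℕ) → (Fin (p + 1) → Vec n) → (Fin p → ℝ) → Fin p → Vec n
  | 0, _, _, a => a.elim0
  | (p + 1), verts, s, a =>
      Fin.cases (GmapV n p (fun l => verts l.succ) (Fin.tail s) - verts 0)
        (fun a' => s 0 • Gder n p (fun l => verts l.succ) (Fin.tail s) a') a

@[simp] lemma Gder_zero (n p : ℕ) (verts : Fin (p + 2) → Vec n) (s : Fin (p+1) → ℝ) :
    Gder n (p+1) verts s 0 = GmapV n p (fun l => verts l.succ) (Fin.tail s) - verts 0 := rfl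

@[simp] lemma Gder_succ (n p : ℕ) (verts : Fin (p + 2) → Vec n) (s : Fin (p+1) → ℝ) (a : Fin p) :
    Gder n (p+1) verts s a.succ = s 0 • Gder n p (fun l => verts l.succ) (Fin.tail s) a := rfl

lemma Gmap_continuous (n : ℕ) : ∀ (p : ℕ) (verts : Fin (p + 1) → Vec n),
    Continuous (GmapV n p verts) := by
  intro p
  induction p with
  | zero => intro verts; simp only [funext (Gmap_zero n verts)]; exact continuous_const
  | succ p ih =>
    intro verts
    simp only [funext (Gmap_succ n p verts)]
    have htail : Continuous (Fin.tail : (Fin (p+1) → ℝ) → (Fin p → ℝ)) :=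
      continuous_pi fun i => continuous_apply _
    exact (((continuous_const.sub (continuous_apply 0)).smul continuous_const).add
      ((continuous_apply 0).smul ((ih _).comp htail)))

lemma Gder_continuous (n : ℕ) : ∀ (p : ℕ) (verts : Fin (p + 1) → Vec n) (a : Fin p),
    Continuous (fun s => Gder n p verts s a) := by
  intro p
  induction p with
  | zero => intro _ a; exact a.elim0
  | succ p ih =>
    intro verts a
    have htail : Continuous (Fin.tail : (Fin (p+1) → ℝ) → (Fin p → ℝ)) :=
      continuous_pi fun i => continuous_apply _
    induction a using Fin.cases with
    | zero =>
      simp only [Gder_zero]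
      exact ((Gmap_continuous n p _).comp htail).sub continuous_const
    | succ a =>
      simp only [Gder_succ]
      exact (continuous_apply _).smul ((ih _ a).comp htail)

lemma Gmap_hasFDeriv (n : ℕ) : ∀ (p : ℕ) (verts : Fin (p + 1) → Vec n) (s : Fin p → ℝ),
    ∃ L : (Fin p → ℝ) →L[ℝ] Vec n, HasFDerivAt (GmapV n p verts) L s ∧
      ∀ a, L (Pi.single a 1) = Gder n p verts s a := by
  intro p
  induction p with
  | zero =>
    intro verts s
    refine ⟨0, ?_, fun a => a.elim0⟩
    simp only [funext (Gmap_zero n verts)]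
    exact hasFDerivAt_const _ _
  | succ p ih =>
    intro verts s
    obtain ⟨L', hL', hLa'⟩ := ih (fun l => verts l.succ) (Fin.tail s)
    set tailL : (Fin (p+1) → ℝ) →L[ℝ] (Fin p → ℝ) :=
      (ContinuousLinearMap.pi fun i : Fin p => ContinuousLinearMap.proj i.succ) with htailL
    have htail_eq : ∀ x : Fin (p+1) → ℝ, tailL x = Fin.tail x := fun x => rfl
    have h0 : HasFDerivAt (fun x : Fin (p+1) → ℝ => x 0)
        ((ContinuousLinearMap.proj 0 : (Fin (p+1) → ℝ) →L[ℝ] ℝ)) s :=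
      (ContinuousLinearMap.proj 0 : (Fin (p+1) → ℝ) →L[ℝ] ℝ).hasFDerivAt
    have hG' : HasFDerivAt (fun x : Fin (p+1) → ℝ => GmapV n p (fun l => verts l.succ) (Fin.tail x))
        (L'.comp tailL) s := by
      have := hL'.comp s (tailL.hasFDerivAt (x := s))
      exact this
    -- first summand: (1 - x 0) • verts 0
    have h1 : HasFDerivAt (fun x : Fin (p+1) → ℝ => (1 - x 0) • verts 0)
        ((-(ContinuousLinearMap.proj 0 : (Fin (p+1) → ℝ) →L[ℝ] ℝ)).smulRight (verts 0)) s := by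
      have hc : HasFDerivAt (fun x : Fin (p+1) → ℝ => 1 - x 0)
          (-(ContinuousLinearMap.proj 0 : (Fin (p+1) → ℝ) →L[ℝ] ℝ)) s := by
        have := (hasFDerivAt_const (1:ℝ) s).sub h0; rwa [zero_sub] at this
      simpa using hc.smul (hasFDerivAt_const (verts 0) s)
    -- second summand: x 0 • G'(tail x)
    have h2 : HasFDerivAt (fun x : Fin (p+1) → ℝ => x 0 • GmapV n p (fun l => verts l.succ) (Fin.tail x))
        (s 0 • (L'.comp tailL) + (ContinuousLinearMap.proj 0 :
          (Fin (p+1) → ℝ) →L[ℝ] ℝ).smulRight (GmapV n p (fun l => verts l.succ) (Fin.tail s))) s :=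
      h0.smul hG'
    refine ⟨(-(ContinuousLinearMap.proj 0 : (Fin (p+1) → ℝ) →L[ℝ] ℝ)).smulRight (verts 0) +
      (s 0 • (L'.comp tailL) + (ContinuousLinearMap.proj 0 :
        (Fin (p+1) → ℝ) →L[ℝ] ℝ).smulRight (GmapV n p (fun l => verts l.succ) (Fin.tail s))), ?_, ?_⟩
    · simp only [funext (Gmap_succ n p verts)]
      exact h1.add h2
    · intro a
      induction a using Fin.cases with
      | zero =>
        have e1 : tailL (Pi.single (0 : Fin (p+1)) (1:ℝ)) = 0 := by
          funext i; simp [htail_eq, Fin.tail, Pi.single_eq_of_ne (Fin.succ_ne_zero i)]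
        simp [ContinuousLinearMap.add_apply, e1, Gder_zero]
        abel
      | succ a =>
        have e1 : tailL (Pi.single (a.succ : Fin (p+1)) (1:ℝ)) = Pi.single a 1 := by
          funext i; simp only [htail_eq]
          show (Pi.single a.succ 1 : Fin (p+1) → ℝ) i.succ = (Pi.single a 1 : Fin p → ℝ) i
          rcases eq_or_ne i a with rfl | h
          · simp
          · rw [Pi.single_eq_of_ne (fun hh => h (Fin.succ_injective _ hh)),
              Pi.single_eq_of_ne h]
        have e2 : (Pi.single a.succ 1 : Fin (p+1) → ℝ) 0 = 0 :=
          Pi.single_eq_of_ne (Fin.succ_ne_zero a).symm 1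
        simp [ContinuousLinearMap.add_apply, e1, e2, Gder_succ, hLa' a]

lemma fderiv_Gmap (n p : ℕ) (verts : Fin (p + 1) → Vec n) (s : Fin p → ℝ) (a : Fin p) :
    fderiv ℝ (GmapV n p verts) s (Pi.single a 1) = Gder n p verts s a := by
  obtain ⟨L, hL, hLa⟩ := Gmap_hasFDeriv n p verts s
  rw [hL.fderiv]; exact hLa a


/-- `h^i` on raw homogeneous forms. -/
noncomputable def hRaw (n : ℕ) (i : Fin (n + 1)) (p : ℕ)
    (ω : Vec n → (Fin (p + 1) → Vec n) → ℝ) : Vec n → (Fin p → Vec n) → ℝ :=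
  fun t v => ∫ s in (0:ℝ)..1, (1 - s) ^ p *
    ω ((1 - s) • t + s • eVec n i) (Fin.cons (eVec n i - t) v)

/-- iterated `hRaw`, evaluated at the last vertex. -/
noncomputable def hIter (n : ℕ) : (p : ℕ) → (Fin (p + 1) → Fin (n + 1)) →
    (Vec n → (Fin p → Vec n) → ℝ) → ℝ
  | 0, c, ω => ω (eVec n (c 0)) (fun i => i.elim0)
  | (p + 1), c, ω => hIter n p (fun l => c l.succ) (hRaw n (c 0) p ω)

lemma hOp_ofDeg (n : ℕ) (i : Fin (n + 1)) (p : ℕ) (ω : Vec n → (Fin (p + 1) → Vec n) → ℝ) :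
    hOp n i (ofDeg n (p + 1) ω) = ofDeg n p (hRaw n i p ω) := by
  funext q t v
  rcases eq_or_ne q p with rfl | h
  · show hOp n i (ofDeg n (q + 1) ω) q t v = ofDeg n q (hRaw n i q ω) q t v
    simp only [hOp, hRaw, ofDeg, dite_eq_ite, if_pos rfl]
    simp
  · have h' : q + 1 ≠ p + 1 := fun hh => h (Nat.succ_injective hh)
    rw [hOp, ofDeg, dif_neg h]
    simp only [ofDeg, dif_neg h', mul_zero]
    exact intervalIntegral.integral_zero

lemma hTuple_cons (n m : ℕ) (i : Fin (n + 1)) (c : Fin m → Fin (n + 1)) (F : MForm n) :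
    hTuple n (Fin.cons i c) F = hTuple n c (hOp n i F) := by
  rw [hTuple, hTuple, List.ofFn_succ]
  simp [Fin.cons_succ]

lemma bridge (n : ℕ) : ∀ (m : ℕ) (c : Fin (m + 1) → Fin (n + 1))
    (ω : Vec n → (Fin m → Vec n) → ℝ),
    hTuple n (fun a : Fin m => c a.castSucc) (ofDeg n m ω) 0
        (eVec n (c (Fin.last m))) (fun i => i.elim0) = hIter n m c ω := by
  intro m
  induction m with
  | zero =>
    intro c ω
    show ofDeg n 0 ω 0 _ _ = _
    rw [ofDeg, dif_pos rfl, hIter]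
    congr 1
  | succ m ih =>
    intro c ω
    have hc : (fun a : Fin (m + 1) => c a.castSucc)
        = Fin.cons (c 0) (fun a : Fin m => c ((Fin.succ a).castSucc)) := by
      funext a
      induction a using Fin.cases with
      | zero => simp
      | succ a => simp
    rw [hc, hTuple_cons, hOp_ofDeg, hIter]
    have h2 : (fun a : Fin m => c (Fin.succ a).castSucc)
        = fun a : Fin m => (fun l : Fin (m + 1) => c l.succ) a.castSucc := by
      funext a; exact congrArg c (Fin.ext (by simp))
    have h3 : c (Fin.last (m + 1)) = (fun l : Fin (m + 1) => c l.succ) (Fin.last m) := by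
      exact congrArg c (Fin.ext (by simp))
    rw [h2, h3]
    exact ih (fun l => c l.succ) (hRaw n (c 0) m ω)


lemma continuous_finCons {α : Type*} [TopologicalSpace α] (p : ℕ) :
    Continuous fun y : α × (Fin p → α) => (Fin.cons y.1 y.2 : Fin (p + 1) → α) := by
  refine continuous_pi fun i => ?_
  induction i using Fin.cases with
  | zero => simpa using continuous_fst
  | succ a => simp only [Fin.cons_succ]; exact (continuous_apply a).comp continuous_snd

lemma hRaw_smul (n : ℕ) (i : Fin (n + 1)) (p : ℕ) (ω : Vec n → (Fin (p + 1) → Vec n) → ℝ)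
    (hω : ∀ t (a : Fin (p+1) → ℝ) v, ω t (fun j => a j • v j) = (∏ j, a j) * ω t v)
    (t : Vec n) (a : Fin p → ℝ) (v : Fin p → Vec n) :
    hRaw n i p ω t (fun j => a j • v j) = (∏ j, a j) * hRaw n i p ω t v := by
  rw [hRaw, hRaw, ← intervalIntegral.integral_const_mul]
  refine intervalIntegral.integral_congr fun s _ => ?_
  have : (Fin.cons (eVec n i - t) (fun j => a j • v j) : Fin (p+1) → Vec n)
      = fun j => (Fin.cons 1 a : Fin (p+1) → ℝ) j • (Fin.cons (eVec n i - t) v : Fin (p+1) → Vec n) j := by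
    funext j
    induction j using Fin.cases with
    | zero => simp
    | succ b => simp
  rw [this, hω]
  rw [Fin.prod_cons]
  ring

lemma hRaw_cont (n : ℕ) (i : Fin (n + 1)) (p : ℕ) (ω : Vec n → (Fin (p + 1) → Vec n) → ℝ)
    (hω : Continuous fun x : Vec n × (Fin (p+1) → Vec n) => ω x.1 x.2) :
    Continuous fun x : Vec n × (Fin p → Vec n) => hRaw n i p ω x.1 x.2 := by
  apply intervalIntegral.continuous_parametric_intervalIntegral_of_continuous
    (f := fun (x : Vec n × (Fin p → Vec n)) (s : ℝ) => (1 - s) ^ p *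
      ω ((1 - s) • x.1 + s • eVec n i) (Fin.cons (eVec n i - x.1) x.2))
  · apply Continuous.mul
    · fun_prop
    · refine hω.comp (Continuous.prodMk ?_ ?_)
      · fun_prop
      · exact (continuous_finCons p).comp
          (Continuous.prodMk (by fun_prop) (by fun_prop))
  · exact continuous_const


lemma isCompact_cube (p : ℕ) : IsCompact (cubeSet p) :=
  isCompact_univ_pi fun _ => isCompact_Icc

lemma setIntegral_swap' {α β : Type*} [MeasurableSpace α] [MeasurableSpace β]
    (μ : Measure α) (ν : Measure β) [SFinite μ] [SFinite ν] {s : Set α} {t : Set β}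
    (F : α → β → ℝ) (hF : IntegrableOn (Function.uncurry F) (s ×ˢ t) (μ.prod ν)) :
    ∫ x in s, ∫ y in t, F x y ∂ν ∂μ = ∫ y in t, ∫ x in s, F x y ∂μ ∂ν := by
  refine MeasureTheory.integral_integral_swap ?_
  rwa [Measure.prod_restrict]

lemma main_ind (n : ℕ) : ∀ (p : ℕ) (ω : Vec n → (Fin p → Vec n) → ℝ),
    (Continuous fun x : Vec n × (Fin p → Vec n) => ω x.1 x.2) →
    (∀ t (a : Fin p → ℝ) v, ω t (fun j => a j • v j) = (∏ j, a j) * ω t v) →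
    ∀ (c : Fin (p + 1) → Fin (n + 1)),
    simplexInt n p c ω = (-1 : ℝ) ^ p * hIter n p c ω := by
  intro p
  induction p with
  | zero =>
    intro ω hcont hsmul c
    rw [simplexInt, simplexIntV]
    have h1 : (fun s : Fin 0 → ℝ => ω (GmapV n 0 (fun l => eVec n (c l)) s)
        (fun a => fderiv ℝ (GmapV n 0 (fun l => eVec n (c l))) s (Pi.single a 1)))
        = fun _ => ω (eVec n (c 0)) (fun i : Fin 0 => i.elim0) := by
      funext s
      rw [Gmap_zero]
      congr 1
      funext a; exact a.elim0
    rw [h1, setIntegral_const]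
    have h2 : cubeSet 0 = Set.univ := by ext x; simp [cubeSet]
    have h3 : (volume (Set.univ : Set (Fin 0 → ℝ))) = 1 := by
      rw [MeasureTheory.volume_pi, ← Set.pi_univ Set.univ, MeasureTheory.Measure.pi_pi]
      simp
    rw [h2, measureReal_def, h3, hIter]
    simp
  | succ p ih =>
    intro ω hcont hsmul c
    -- notation
    set e0 : Vec n := eVec n (c 0) with he0
    set verts : Fin (p+2) → Vec n := fun l => eVec n (c l) with hverts
    set verts' : Fin (p+1) → Vec n := fun l => eVec n (c l.succ) with hverts'
    have hvs : (fun l : Fin (p+1) => verts l.succ) = verts' := rfl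
    set G' := GmapV n p verts' with hG'
    set ω1 := hRaw n (c 0) p ω with hω1
    have hω1cont : Continuous fun x : Vec n × (Fin p → Vec n) => ω1 x.1 x.2 :=
      hRaw_cont n (c 0) p ω hcont
    have hω1smul : ∀ t (a : Fin p → ℝ) v, ω1 t (fun j => a j • v j) = (∏ j, a j) * ω1 t v :=
      hRaw_smul n (c 0) p ω hsmul
    have IH := ih ω1 hω1cont hω1smul (fun l => c l.succ)
    suffices hmain : simplexInt n (p+1) c ω = - simplexInt n p (fun l => c l.succ) ω1 by
      rw [hmain, IH, hIter]
      ring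
    -- the two integrands
    set H : ℝ × (Fin p → ℝ) → ℝ := fun y =>
      ω ((1 - y.1) • e0 + y.1 • G' y.2)
        (Fin.cons (G' y.2 - e0) (fun a => Gder n p verts' y.2 a)) with hH
    set K : ℝ → (Fin p → ℝ) → ℝ := fun x s' =>
      ω ((1 - x) • G' s' + x • e0)
        (Fin.cons (e0 - G' s') (fun a => Gder n p verts' s' a)) with hK
    -- continuity facts
    have hG'c : Continuous G' := Gmap_continuous n p verts'
    have hDc : ∀ a, Continuous fun s' => Gder n p verts' s' a := Gder_continuous n p verts'
    have hHc : Continuous H := by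
      have h1 : Continuous fun y : ℝ × (Fin p → ℝ) =>
          ((((1 : ℝ) - y.1) • e0 + y.1 • G' y.2,
            (Fin.cons (G' y.2 - e0) fun a => Gder n p verts' y.2 a)) :
            Vec n × (Fin (p+1) → Vec n)) := by
        refine Continuous.prodMk (by fun_prop) ?_
        exact (continuous_finCons p).comp
          (Continuous.prodMk (by fun_prop)
            (continuous_pi fun a => (hDc a).comp continuous_snd))
      exact hcont.comp h1
    have hKc : Continuous fun y : ℝ × (Fin p → ℝ) => K y.1 y.2 := by
      have h1 : Continuous fun y : ℝ × (Fin p → ℝ) =>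
          ((((1 : ℝ) - y.1) • G' y.2 + y.1 • e0,
            (Fin.cons (e0 - G' y.2) fun a => Gder n p verts' y.2 a)) :
            Vec n × (Fin (p+1) → Vec n)) := by
        refine Continuous.prodMk (by fun_prop) ?_
        exact (continuous_finCons p).comp
          (Continuous.prodMk (by fun_prop)
            (continuous_pi fun a => (hDc a).comp continuous_snd))
      exact hcont.comp h1
    -- Step 1 : rewrite fderiv
    have step1 : simplexInt n (p+1) c ω
        = ∫ s in cubeSet (p+1), ω (GmapV n (p+1) verts s)
            (fun a => Gder n (p+1) verts s a) := by
      rw [simplexInt, simplexIntV]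
      congr 1
      funext s
      congr 1
      funext a
      rw [fderiv_Gmap]
    -- Step 2 : split off the first coordinate
    have e := MeasurableEquiv.piFinSuccAbove (fun _ : Fin (p+1) => ℝ) 0
    have hpre : (⇑(MeasurableEquiv.piFinSuccAbove (fun _ : Fin (p+1) => ℝ) 0)) ⁻¹'
        ((Set.Icc (0:ℝ) 1) ×ˢ cubeSet p) = cubeSet (p+1) := by
      ext x
      simp only [Set.mem_preimage, Set.mem_prod, cubeSet, Set.mem_pi, Set.mem_univ,
        true_implies]
      constructor
      · rintro ⟨h0, hs⟩ i
        induction i using Fin.cases with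
        | zero => exact h0
        | succ a => simpa [Fin.succAbove_zero, Fin.tail] using hs a
      · intro h
        exact ⟨h 0, fun a => by simpa [Fin.succAbove_zero, Fin.tail] using h a.succ⟩
    have step2 : (∫ s in cubeSet (p+1), ω (GmapV n (p+1) verts s)
            (fun a => Gder n (p+1) verts s a))
        = ∫ y in (Set.Icc (0:ℝ) 1) ×ˢ cubeSet p,
            ω (GmapV n (p+1) verts (Fin.cons y.1 y.2))
              (fun a => Gder n (p+1) verts (Fin.cons y.1 y.2) a) := by
      rw [← hpre]
      rw [MeasureTheory.volume_pi (ι := Fin (p+1)), Measure.volume_eq_prod,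
        MeasureTheory.volume_pi (ι := Fin p)]
      rw [← (measurePreserving_piFinSuccAbove (fun _ : Fin (p+1) => (volume : Measure ℝ)) 0).setIntegral_preimage_emb
        (MeasurableEquiv.piFinSuccAbove (fun _ : Fin (p+1) => ℝ) 0).measurableEmbedding
        (fun y => ω (GmapV n (p+1) verts (Fin.cons y.1 y.2))
          (fun a => Gder n (p+1) verts (Fin.cons y.1 y.2) a))
        ((Set.Icc (0:ℝ) 1) ×ˢ cubeSet p)]
      have he : ∀ x : Fin (p+1) → ℝ,
          (MeasurableEquiv.piFinSuccAbove (fun _ : Fin (p+1) => ℝ) 0) x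
            = (x 0, Fin.tail x) := by
        intro x
        refine Prod.ext rfl ?_
        funext j
        show x ((0 : Fin (p+1)).succAbove j) = x j.succ
        rw [Fin.succAbove_zero]
      simp only [he, Fin.cons_self_tail]
    -- Step 3 : pointwise identity on the product
    have step3 : ∀ (x : ℝ) (s' : Fin p → ℝ),
        ω (GmapV n (p+1) verts (Fin.cons x s'))
            (fun a => Gder n (p+1) verts (Fin.cons x s') a)
          = x ^ p * H (x, s') := by
      intro x s'
      have hv : (fun a : Fin (p+1) => Gder n (p+1) verts (Fin.cons x s') a)
          = Fin.cons (G' s' - e0) (fun a => x • Gder n p verts' s' a) := by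
        funext a
        induction a using Fin.cases with
        | zero => rw [Gder_zero]; rw [Fin.tail_cons, hvs]; rfl
        | succ a => rw [Gder_succ]; rw [Fin.tail_cons, hvs]; rfl
      have hsm : (Fin.cons (G' s' - e0) (fun a => x • Gder n p verts' s' a) : Fin (p+1) → Vec n)
          = fun j => (Fin.cons 1 (fun _ => x) : Fin (p+1) → ℝ) j •
              (Fin.cons (G' s' - e0) (fun a => Gder n p verts' s' a) : Fin (p+1) → Vec n) j := by
        funext j
        induction j using Fin.cases with
        | zero => simp
        | succ a => simp
      rw [hv, hsm, hsmul]
      rw [Gmap_succ, Fin.tail_cons, Fin.cons_zero, hvs]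
      rw [Fin.prod_cons, Finset.prod_const, Finset.card_univ, Fintype.card_fin, one_mul]
    -- Step 4 : Fubini
    have hHint : IntegrableOn (fun y : ℝ × (Fin p → ℝ) => y.1 ^ p * H y)
        ((Set.Icc (0:ℝ) 1) ×ˢ cubeSet p) (volume.prod volume) := by
      apply ContinuousOn.integrableOn_compact (isCompact_Icc.prod (isCompact_cube p))
      exact (Continuous.mul (by fun_prop) hHc).continuousOn
    have step4 : (∫ y in (Set.Icc (0:ℝ) 1) ×ˢ cubeSet p,
            ω (GmapV n (p+1) verts (Fin.cons y.1 y.2))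
              (fun a => Gder n (p+1) verts (Fin.cons y.1 y.2) a))
        = ∫ x in Set.Icc (0:ℝ) 1, x ^ p * ∫ s' in cubeSet p, H (x, s') := by
      have : (fun y : ℝ × (Fin p → ℝ) => ω (GmapV n (p+1) verts (Fin.cons y.1 y.2))
              (fun a => Gder n (p+1) verts (Fin.cons y.1 y.2) a))
          = fun y => y.1 ^ p * H y := by
        funext y; exact step3 y.1 y.2
      rw [this]
      rw [Measure.volume_eq_prod, MeasureTheory.setIntegral_prod _ hHint]
      refine setIntegral_congr_fun measurableSet_Icc fun x _ => ?_
      exact MeasureTheory.integral_const_mul (μ := volume.restrict (cubeSet p)) (x ^ p) (fun s' => H (x, s'))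
    -- Step 5/6 : to interval integral and substitute x ↦ 1 - x
    set Ψ : ℝ → ℝ := fun x => ∫ s' in cubeSet p, H (x, s') with hΨ
    have step5 : (∫ x in Set.Icc (0:ℝ) 1, x ^ p * Ψ x)
        = ∫ x in (0:ℝ)..1, (1-x) ^ p * Ψ (1-x) := by
      rw [integral_Icc_eq_integral_Ioc, ← intervalIntegral.integral_of_le zero_le_one]
      have := intervalIntegral.integral_comp_sub_left (a := (0:ℝ)) (b := (1:ℝ)) (fun x => x ^ p * Ψ x) 1
      simp only [sub_self, sub_zero] at this
      rw [← this]
    -- Step 7 : Ψ (1-x) = - ∫ K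
    have step7 : ∀ x : ℝ, Ψ (1-x) = - ∫ s' in cubeSet p, K x s' := by
      intro x
      rw [hΨ, ← MeasureTheory.integral_neg]
      refine setIntegral_congr_fun (MeasurableSet.univ_pi fun _ => measurableSet_Icc)
        fun s' _ => ?_
      show H (1-x, s') = - K x s'
      rw [hH, hK]
      simp only
      have h1 : (1 : ℝ) - (1 - x) = x := by ring
      have hsm : (Fin.cons (G' s' - e0) (fun a => Gder n p verts' s' a) : Fin (p+1) → Vec n)
          = fun j => (Fin.cons (-1 : ℝ) (fun _ => (1:ℝ)) : Fin (p+1) → ℝ) j •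
              (Fin.cons (e0 - G' s') (fun a => Gder n p verts' s' a) : Fin (p+1) → Vec n) j := by
        funext j
        induction j using Fin.cases with
        | zero => simp [neg_sub]
        | succ a => simp
      rw [h1, hsm, hsmul]
      rw [Fin.prod_cons, Finset.prod_const, one_pow, mul_one]
      have h2 : (1 - x) • G' s' + x • e0 = x • e0 + (1 - x) • G' s' := by abel
      rw [h2]
      ring
    -- Step 8 : put together and swap
    have hKint : IntegrableOn (Function.uncurry fun x s' => (1-x) ^ p * K x s')
        ((Set.Icc (0:ℝ) 1) ×ˢ cubeSet p) (volume.prod volume) := by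
      apply ContinuousOn.integrableOn_compact (isCompact_Icc.prod (isCompact_cube p))
      refine Continuous.continuousOn ?_
      exact Continuous.mul (by fun_prop) hKc
    have step8 : (∫ x in (0:ℝ)..1, (1-x) ^ p * Ψ (1-x))
        = - ∫ s' in cubeSet p, ∫ x in Set.Icc (0:ℝ) 1, (1-x) ^ p * K x s' := by
      have h1 : (fun x => (1-x) ^ p * Ψ (1-x))
          = fun x => - ∫ s' in cubeSet p, (1-x) ^ p * K x s' := by
        funext x
        rw [step7, MeasureTheory.integral_const_mul]
        ring
      rw [h1]
      rw [intervalIntegral.integral_neg, neg_inj]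
      rw [intervalIntegral.integral_of_le zero_le_one, ← integral_Icc_eq_integral_Ioc]
      exact setIntegral_swap' volume volume _ hKint
    -- Step 9 : inner integral is ω1
    have step9 : ∀ s' : Fin p → ℝ,
        (∫ x in Set.Icc (0:ℝ) 1, (1-x) ^ p * K x s')
          = ω1 (G' s') (fun a => Gder n p verts' s' a) := by
      intro s'
      rw [hω1, hRaw, intervalIntegral.integral_of_le zero_le_one, ← integral_Icc_eq_integral_Ioc]
    -- Step 10 : recognize simplexInt
    have step10 : (∫ s' in cubeSet p, ω1 (G' s') (fun a => Gder n p verts' s' a))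
        = simplexInt n p (fun l => c l.succ) ω1 := by
      rw [simplexInt, simplexIntV]
      refine setIntegral_congr_fun (MeasurableSet.univ_pi fun _ => measurableSet_Icc)
        fun s' _ => ?_
      congr 1
      funext a
      rw [fderiv_Gmap]
    rw [step1, step2, step4, step5, step8]
    rw [neg_inj]
    rw [← step10]
    refine setIntegral_congr_fun (MeasurableSet.univ_pi fun _ => measurableSet_Icc)
      fun s' _ => step9 s'


lemma omega_expand (n m : ℕ) (f : MultilinearMap ℝ (fun _ : Fin m => Vec n) ℝ)
    (v : Fin m → Vec n) :
    f v = ∑ d : Fin m → Fin (n + 1), (∏ i, v i (d i)) * f (fun i => eVec n (d i)) := by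
  have hv : ∀ i, v i = ∑ j : Fin (n+1), (v i j) • eVec n j := by
    intro i
    simp only [eVec]
    conv_lhs => rw [← Finset.univ_sum_single (v i)]
    refine Finset.sum_congr rfl fun j _ => ?_
    rw [← Pi.single_smul, smul_eq_mul, mul_one]
  calc f v = f (fun i => ∑ j : Fin (n+1), (v i j) • eVec n j) := by
        congr 1; funext i; exact hv i
    _ = ∑ d : Fin m → Fin (n + 1), f (fun i => (v i (d i)) • eVec n (d i)) :=
        f.map_sum (fun i j => (v i j) • eVec n j)
    _ = ∑ d : Fin m → Fin (n + 1), (∏ i, v i (d i)) * f (fun i => eVec n (d i)) := by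
        refine Finset.sum_congr rfl fun d _ => ?_
        rw [f.map_smul_univ]
        rfl

lemma omega_cont (n m : ℕ) (ω : Vec n → (Fin m → Vec n) → ℝ)
    (hmul : ∀ t, ∃ f : MultilinearMap ℝ (fun _ : Fin m => Vec n) ℝ, ∀ v, ω t v = f v)
    (hc : ∀ v : Fin m → Vec n, Continuous fun t => ω t v) :
    Continuous fun x : Vec n × (Fin m → Vec n) => ω x.1 x.2 := by
  have key : ∀ x : Vec n × (Fin m → Vec n), ω x.1 x.2
      = ∑ d : Fin m → Fin (n + 1), (∏ i, x.2 i (d i)) * ω x.1 (fun i => eVec n (d i)) := by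
    intro x
    obtain ⟨f, hf⟩ := hmul x.1
    rw [hf]
    rw [omega_expand n m f x.2]
    refine Finset.sum_congr rfl fun d _ => ?_
    rw [hf]
  rw [funext key]
  refine continuous_finset_sum _ fun d _ => ?_
  refine Continuous.mul ?_ ((hc _).comp continuous_fst)
  refine continuous_finset_prod _ fun i _ => ?_
  have : Continuous fun x : Vec n × (Fin m → Vec n) => x.2 i :=
    (continuous_apply i).comp continuous_snd
  exact (continuous_apply (d i)).comp this


/-- `∫_{[i_0,…,i_p]} ω = (-1)^p · (h^{i_{p-1}} ∘ ⋯ ∘ h^{i_0} ω)(e_{i_p})`. -/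
theorem simplex_integral_eq_iterated_h (n : ℕ) (hn : 1 ≤ n) (q : ℕ)
    (ω : Vec n → AlternatingMap ℝ (Vec n) ℝ (Fin (q + 1)))
    (hω : ∀ v : Fin (q + 1) → Vec n, ContDiff ℝ (⊤ : ℕ∞) (fun t => ω t v))
    (c : Fin (q + 2) → Fin (n + 1)) (hc : StrictMono c) :
    simplexInt n (q + 1) c (fun t v => ω t v)
      = (-1 : ℝ) ^ (q + 1) *
        hTuple n (fun a : Fin (q + 1) => c a.castSucc)
          (ofDeg n (q + 1) (fun t v => ω t v)) 0
          (eVec n (c (Fin.last (q + 1)))) (fun i => i.elim0) := by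
  have hcont : Continuous fun x : Vec n × (Fin (q + 1) → Vec n) => ω x.1 x.2 :=
    omega_cont n (q + 1) (fun t v => ω t v)
      (fun t => ⟨(ω t).toMultilinearMap, fun v => rfl⟩)
      (fun v => (hω v).continuous)
  have hsmul : ∀ t (a : Fin (q + 1) → ℝ) (v : Fin (q + 1) → Vec n),
      ω t (fun j => a j • v j) = (∏ j, a j) * ω t v := by
    intro t a v
    have := (ω t).toMultilinearMap.map_smul_univ a v
    simpa [smul_eq_mul] using this
  have hmain := main_ind n (q + 1) (fun t v => ω t v) hcont hsmul c
  rw [hmain, ← bridge n (q + 1) c (fun t v => ω t v)]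

end
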